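/- Let δ : ℕ → ℝ satisfy δ(n) > 0 for all n and δ(n) → 0 as n → ∞. Then there exist constants K₁, K₂ > 0 and N such that for all n ≥ N, K₁·min{1/δ(n), n} ≤ (f⁻(n,δ(n)))^{1/n} ≤ K₂·min{1/δ(n), n}. -/

import Mathlib

/-- The number of linear extensions of a partial order `P` on `n` points:
bijections to `{1, ..., n}` (modeled as `Fin n` with its usual order) that
are strictly monotone with respect to `P`. -/
noncomputable def linExtCount (n : ℕ) (P : PartialOrder (Fin n)) : ℕ :=
  Nat.card {f : Fin n ≃ Fin n // ∀ x y : Fin n, P.lt x y → f x < f y}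

/-- The number of comparable pairs of `P`: each unordered comparable pair
`{x, y}` corresponds to exactly one ordered pair `(x, y)` with `x ≺ y`. -/
noncomputable def compCount (n : ℕ) (P : PartialOrder (Fin n)) : ℕ :=
  Nat.card {p : Fin n × Fin n // P.lt p.1 p.2}

/-- `f⁻(n, δ)`: the minimum number of linear extensions over partial orders on
`n` points with at most `δ·n(n-1)/2` comparable pairs. -/
noncomputable def fMinus (n : ℕ) (δ : ℝ) : ℕ :=
  sInf {m : ℕ | ∃ P : PartialOrder (Fin n),
    (compCount n P : ℝ) ≤ δ * ((n : ℝ) * ((n : ℝ) - 1) / 2) ∧ linExtCount n P = m}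

open Finset

section Aux


noncomputable def extCount (α : Type) [Fintype α] [PartialOrder α] (n : ℕ) : ℕ :=
  Nat.card {f : α ≃ Fin n // ∀ x y : α, x < y → f x < f y}

lemma nat_card_sigma {α : Type} [Fintype α] (β : α → Type) [∀ x, Finite (β x)] :
    Nat.card (Σ x, β x) = ∑ x, Nat.card (β x) := by
  letI : ∀ x, Fintype (β x) := fun x => Fintype.ofFinite _
  simp [Nat.card_eq_fintype_card]

theorem key : ∀ (n : ℕ) (α : Type) [Fintype α] [PartialOrder α], Fintype.card α = n →
    n.factorial ≤ extCount α n * ∏ x : α, (Nat.card {y : α // y < x} + 1) := by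
  intro n
  induction n with
  | zero =>
    intro α _ _ h
    haveI : IsEmpty α := Fintype.card_eq_zero_iff.mp h
    have h1 : 0 < extCount α 0 := by
      have : Nonempty {f : α ≃ Fin 0 // ∀ x y : α, x < y → f x < f y} :=
        ⟨⟨Equiv.equivOfIsEmpty α (Fin 0), fun a => isEmptyElim a⟩⟩
      exact Nat.card_pos
    simp
    exact h1
  | succ m ih =>
    intro α _ _ h
    classical
    set M : Finset α := univ.filter (fun x => ∀ y, ¬ x < y) with hM
    have hcover : ∀ y : α, ∃ x ∈ M, y ≤ x := by
      intro y
      obtain ⟨x, hxs, hxmax⟩ := (univ.filter (fun z => y ≤ z)).exists_maximal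
        ⟨y, by simp⟩
      refine ⟨x, ?_, (mem_filter.mp hxs).2⟩
      simp only [hM, mem_filter, mem_univ, true_and]
      intro w hw
      exact absurd hw (not_lt_of_ge (hxmax (by simpa using le_trans (mem_filter.mp hxs).2 hw.le) hw.le))
    set c : α → ℕ := fun x => Nat.card {y : α // y < x} + 1 with hc
    have hcard_le : ∀ x : α, (univ.filter (fun y => y ≤ x)).card = c x := by
      intro x
      have : (univ.filter (fun y => y ≤ x)) = (univ.filter (fun y => y < x)) ∪ {x} := by
        ext z
        simp [le_iff_eq_or_lt]
      rw [this, card_union_of_disjoint (by simp), card_singleton]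
      congr 1
      rw [Nat.card_eq_fintype_card, Fintype.card_subtype]
    have hsum : m + 1 ≤ ∑ x ∈ M, c x := by
      have hsub : (univ : Finset α) ⊆ M.biUnion (fun x => univ.filter (fun y => y ≤ x)) := by
        intro y _
        obtain ⟨x, hx, hyx⟩ := hcover y
        exact mem_biUnion.mpr ⟨x, hx, by simp [hyx]⟩
      calc m + 1 = (univ : Finset α).card := by simp [h]
        _ ≤ (M.biUnion (fun x => univ.filter (fun y => y ≤ x))).card := card_le_card hsub
        _ ≤ ∑ x ∈ M, (univ.filter (fun y => y ≤ x)).card := card_biUnion_le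
        _ = ∑ x ∈ M, c x := by simp [hcard_le]
    -- fiber decomposition
    have hfib : extCount α (m+1) =
        ∑ x : α, Nat.card {f : {f : α ≃ Fin (m+1) // ∀ a b : α, a < b → f a < f b} //
          f.1.symm (Fin.last m) = x} := by
      rw [extCount, ← nat_card_sigma]
      exact Nat.card_congr (Equiv.sigmaFiberEquiv
        (fun f : {f : α ≃ Fin (m+1) // ∀ a b : α, a < b → f a < f b} =>
          f.1.symm (Fin.last m))).symm
    -- per maximal element
    have hmain : ∀ x ∈ M, m.factorial * c x ≤
        Nat.card {f : {f : α ≃ Fin (m+1) // ∀ a b : α, a < b → f a < f b} //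
          f.1.symm (Fin.last m) = x} * ∏ y : α, c y := by
      intro x hx
      have hmax : ∀ y, ¬ x < y := by
        have := (mem_filter.mp hx).2
        exact this
      have hcards : Fintype.card {y : α // y ≠ x} = m := by
        have h2 : Fintype.card {y : α // ¬ y = x} =
            Fintype.card α - Fintype.card {y : α // y = x} := Fintype.card_subtype_compl _
        simpa [h, Fintype.card_subtype_eq] using h2
      -- induction hypothesis on subtype
      have hih := ih {y : α // y ≠ x} hcards
      -- identify factors
      have hfac : ∀ y : {y : α // y ≠ x},
          Nat.card {z : {y : α // y ≠ x} // z < y} = Nat.card {z : α // z < y.1} := by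
        intro y
        have hne : ∀ z : α, z < y.1 → z ≠ x := fun z hz hzx =>
          hmax y.1 (by rw [hzx] at hz; exact hz)
        exact Nat.card_congr ⟨fun z => ⟨z.1.1, z.2⟩,
          fun z => ⟨⟨z.1, hne z.1 z.2⟩, z.2⟩, fun z => rfl, fun z => rfl⟩
      have hprod : (∏ y : {y : α // y ≠ x}, (Nat.card {z : {y : α // y ≠ x} // z < y} + 1))
          = ∏ y ∈ univ.erase x, c y := by
        have h1 : (∏ y : {y : α // y ≠ x}, (Nat.card {z : {y : α // y ≠ x} // z < y} + 1))
            = ∏ y : {y : α // y ≠ x}, c y.1 :=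
          Finset.prod_congr rfl (fun y _ => by rw [hfac y])
        rw [h1, ← Finset.prod_subtype (univ.erase x) (fun y => by simp) c]
      -- injection from subtype extensions into the fiber
      have hinj : extCount {y : α // y ≠ x} m ≤
          Nat.card {f : {f : α ≃ Fin (m+1) // ∀ a b : α, a < b → f a < f b} //
            f.1.symm (Fin.last m) = x} := by
        set F : ({y : α // y ≠ x} ≃ Fin m) → (α ≃ Fin (m+1)) := fun g =>
          ((Equiv.optionSubtypeNe x).symm.trans g.optionCongr).trans
            (finSuccEquiv' (Fin.last m)).symm with hF
        have hFx : ∀ g, F g x = Fin.last m := by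
          intro g
          simp [hF, Equiv.optionSubtypeNe_symm_self]
        have hFne : ∀ g (y : α) (hy : y ≠ x), F g y = (g ⟨y, hy⟩).castSucc := by
          intro g y hy
          simp [hF, Equiv.optionSubtypeNe_symm_of_ne hy]
        refine Nat.card_le_card_of_injective (fun g => ⟨⟨F g.1, ?_⟩, ?_⟩) ?_
        · intro a b hab
          by_cases hb : b = x
          · have ha : a ≠ x := by
              rintro rfl
              rw [hb] at hab
              exact lt_irrefl _ hab
            rw [hb, hFx, hFne g.1 a ha]
            exact Fin.castSucc_lt_last _
          · by_cases ha : a = x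
            · rw [ha] at hab
              exact absurd hab (hmax b)
            · rw [hFne g.1 a ha, hFne g.1 b hb]
              exact Fin.castSucc_lt_castSucc_iff.mpr (g.2 _ _ (Subtype.mk_lt_mk.mpr hab))
        · exact (Equiv.symm_apply_eq _).mpr (hFx g.1).symm
        · intro g g' hgg
          have hFF : F g.1 = F g'.1 := congrArg (fun t => t.1.1) hgg
          refine Subtype.ext (Equiv.ext (fun y => ?_))
          have h3 : F g.1 y.1 = F g'.1 y.1 := by rw [hFF]
          rw [hFne g.1 y.1 y.2, hFne g'.1 y.1 y.2] at h3
          simpa [Fin.castSucc_inj] using h3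
      calc m.factorial * c x
          ≤ (extCount {y : α // y ≠ x} m * ∏ y ∈ univ.erase x, c y) * c x := by
            refine Nat.mul_le_mul_right _ ?_
            calc m.factorial ≤ extCount {y : α // y ≠ x} m *
                ∏ y : {y : α // y ≠ x}, (Nat.card {z : {y : α // y ≠ x} // z < y} + 1) := hih
              _ = extCount {y : α // y ≠ x} m * ∏ y ∈ univ.erase x, c y := by rw [hprod]
        _ = extCount {y : α // y ≠ x} m * ((∏ y ∈ univ.erase x, c y) * c x) := by ring
        _ = extCount {y : α // y ≠ x} m * ∏ y : α, c y := by
            rw [Finset.prod_erase_mul univ c (mem_univ x)]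
        _ ≤ _ := Nat.mul_le_mul_right _ hinj
    -- assemble
    calc (m+1).factorial = m.factorial * (m+1) := by
          rw [Nat.factorial_succ]; ring
      _ ≤ m.factorial * ∑ x ∈ M, c x := Nat.mul_le_mul_left _ hsum
      _ = ∑ x ∈ M, m.factorial * c x := by rw [Finset.mul_sum]
      _ ≤ ∑ x ∈ M, (Nat.card {f : {f : α ≃ Fin (m+1) // ∀ a b : α, a < b → f a < f b} //
            f.1.symm (Fin.last m) = x} * ∏ y : α, c y) := Finset.sum_le_sum hmain
      _ = (∑ x ∈ M, Nat.card {f : {f : α ≃ Fin (m+1) // ∀ a b : α, a < b → f a < f b} //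
            f.1.symm (Fin.last m) = x}) * ∏ y : α, c y := by rw [Finset.sum_mul]
      _ ≤ (∑ x : α, Nat.card {f : {f : α ≃ Fin (m+1) // ∀ a b : α, a < b → f a < f b} //
            f.1.symm (Fin.last m) = x}) * ∏ y : α, c y := by
            refine Nat.mul_le_mul_right _ ?_
            exact Finset.sum_le_sum_of_subset (Finset.subset_univ M)
      _ = extCount α (m+1) * ∏ y : α, c y := by rw [hfib]


-- helpers
lemma pow_le_exp_mul_factorial : ∀ n : ℕ, (n:ℝ)^n ≤ Real.exp 1 ^ n * n.factorial := by
  intro n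
  induction n with
  | zero => simp
  | succ m ih =>
    have hstep : ((m:ℝ)+1)^m ≤ Real.exp 1 * m^m := by
      rcases Nat.eq_zero_or_pos m with hm | hm
      · subst hm; simpa using Real.one_le_exp (by norm_num : (0:ℝ) ≤ 1)
      · have hmpos : (0:ℝ) < m := by exact_mod_cast hm
        have h1 : (m:ℝ) + 1 ≤ m * Real.exp (1/m) := by
          have := Real.add_one_le_exp (1/(m:ℝ))
          calc (m:ℝ) + 1 = m * (1 + 1/m) := by field_simp
            _ ≤ m * Real.exp (1/m) := by
                refine mul_le_mul_of_nonneg_left ?_ (le_of_lt hmpos)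
                linarith [Real.add_one_le_exp (1/(m:ℝ))]
        calc ((m:ℝ)+1)^m ≤ (m * Real.exp (1/m))^m := by
              refine pow_le_pow_left₀ (by positivity) h1 m
          _ = m^m * Real.exp (1/m) ^ m := by rw [mul_pow]
          _ = m^m * Real.exp 1 := by
              rw [← Real.exp_nat_mul]
              congr 1
              field_simp
          _ = Real.exp 1 * m^m := by ring
    have hcast : ((m+1:ℕ):ℝ) = (m:ℝ) + 1 := by push_cast; ring
    calc ((m+1:ℕ):ℝ)^(m+1) = ((m:ℝ)+1)^m * ((m:ℝ)+1) := by rw [hcast, pow_succ]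
      _ ≤ (Real.exp 1 * m^m) * ((m:ℝ)+1) := by
          refine mul_le_mul_of_nonneg_right hstep (by positivity)
      _ ≤ (Real.exp 1 * (Real.exp 1 ^ m * m.factorial)) * ((m:ℝ)+1) := by
          refine mul_le_mul_of_nonneg_right (mul_le_mul_of_nonneg_left ih (by positivity)) (by positivity)
      _ = Real.exp 1 ^ (m+1) * ((m+1).factorial) := by
          rw [Nat.factorial_succ]
          push_cast
          ring
lemma le_rpow_inv_of_pow_le {A E : ℝ} (hA : 0 ≤ A) {n : ℕ} (hn : n ≠ 0) (h : A^n ≤ E) :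
    A ≤ E ^ ((n:ℝ)⁻¹) := by
  have hAn : A = (A^n) ^ ((n:ℝ)⁻¹) := by
    rw [← Real.rpow_natCast A n, ← Real.rpow_mul hA, mul_inv_cancel₀ (by exact_mod_cast hn), Real.rpow_one]
  rw [hAn]
  exact Real.rpow_le_rpow (by positivity) h (by positivity)

lemma rpow_inv_le_of_le_pow {E : ℝ} {k n : ℕ} (hn : n ≠ 0) (h : E ≤ (k:ℝ)^n) (hE : 0 ≤ E) :
    E ^ ((n:ℝ)⁻¹) ≤ k := by
  have : ((k:ℝ)^n) ^ ((n:ℝ)⁻¹) = k := by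
    rw [← Real.rpow_natCast (k:ℝ) n, ← Real.rpow_mul (by positivity), mul_inv_cancel₀ (by exact_mod_cast hn), Real.rpow_one]
  calc E ^ ((n:ℝ)⁻¹) ≤ ((k:ℝ)^n) ^ ((n:ℝ)⁻¹) := Real.rpow_le_rpow hE h (by positivity)
    _ = k := this

lemma linExt_eq_extCount (n : ℕ) (P : PartialOrder (Fin n)) :
    linExtCount n P = @extCount (Fin n) _ P n := rfl

lemma compCount_eq_sum (n : ℕ) (P : PartialOrder (Fin n)) :
    compCount n P = ∑ x : Fin n, Nat.card {y : Fin n // P.lt y x} := by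
  rw [compCount, ← nat_card_sigma]
  exact Nat.card_congr ⟨fun p => ⟨p.1.2, ⟨p.1.1, p.2⟩⟩, fun q => ⟨(q.2.1, q.1), q.2.2⟩,
    fun p => rfl, fun q => rfl⟩

lemma key_real (n : ℕ) (hn : 1 ≤ n) (P : PartialOrder (Fin n)) :
    ((n:ℝ)^2)^n ≤ (linExtCount n P : ℝ) * (Real.exp 1 * ((n:ℝ) + compCount n P))^n := by
  classical
  have hkey := @key n (Fin n) _ P (by simp)
  rw [← linExt_eq_extCount] at hkey
  set c : Fin n → ℕ := fun x => Nat.card {y : Fin n // P.lt y x} + 1 with hc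
  have hkey' : (n.factorial : ℝ) ≤ (linExtCount n P : ℝ) * ∏ x : Fin n, (c x : ℝ) := by
    have := hkey
    push_cast
    exact_mod_cast hkey
  have hsumc : ∑ x : Fin n, (c x : ℝ) = (n:ℝ) + compCount n P := by
    rw [compCount_eq_sum]
    push_cast
    simp only [hc, Nat.cast_add, Nat.cast_one, Finset.sum_add_distrib]
    simp [add_comm]
  -- AM-GM
  have hnR : (0:ℝ) < n := by exact_mod_cast hn
  have hamgm : (∏ x : Fin n, (c x : ℝ)) ≤ (((n:ℝ) + compCount n P) / n)^n := by
    have h1 := Real.geom_mean_le_arith_mean_weighted (univ : Finset (Fin n))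
      (fun _ => (n:ℝ)⁻¹) (fun x => (c x : ℝ)) (fun i _ => by positivity)
      (by simp [Finset.card_univ]; field_simp) (fun i _ => by positivity)
    have h2 : ∏ i : Fin n, (c i : ℝ) ^ ((n:ℝ)⁻¹) = (∏ i : Fin n, (c i : ℝ)) ^ ((n:ℝ)⁻¹) :=
      Real.finset_prod_rpow _ _ (fun i _ => by positivity) _
    have h3 : ∑ i : Fin n, (n:ℝ)⁻¹ * (c i : ℝ) = ((n:ℝ) + compCount n P) / n := by
      rw [← Finset.mul_sum, hsumc]
      ring
    rw [h2, h3] at h1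
    have h4 : ((∏ i : Fin n, (c i : ℝ)) ^ ((n:ℝ)⁻¹))^(n:ℕ) ≤ (((n:ℝ) + compCount n P) / n)^n :=
      pow_le_pow_left₀ (by positivity) h1 n
    have h5 : ((∏ i : Fin n, (c i : ℝ)) ^ ((n:ℝ)⁻¹))^(n:ℕ) = ∏ i : Fin n, (c i : ℝ) := by
      rw [← Real.rpow_natCast (_ ^ _) n, ← Real.rpow_mul (by positivity),
        inv_mul_cancel₀ (by exact_mod_cast Nat.one_le_iff_ne_zero.mp hn), Real.rpow_one]
    rwa [h5] at h4
  have hfact := pow_le_exp_mul_factorial n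
  have hCpos : (0:ℝ) ≤ (compCount n P : ℝ) := by positivity
  calc ((n:ℝ)^2)^n = (n:ℝ)^n * (n:ℝ)^n := by rw [← pow_add, ← pow_mul]; ring_nf
    _ ≤ (Real.exp 1 ^ n * n.factorial) * (n:ℝ)^n := by
        exact mul_le_mul_of_nonneg_right hfact (by positivity)
    _ ≤ (Real.exp 1 ^ n * ((linExtCount n P : ℝ) * (((n:ℝ) + compCount n P) / n)^n)) * (n:ℝ)^n := by
        refine mul_le_mul_of_nonneg_right (mul_le_mul_of_nonneg_left ?_ (by positivity)) (by positivity)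
        calc (n.factorial : ℝ) ≤ (linExtCount n P : ℝ) * ∏ x : Fin n, (c x : ℝ) := hkey'
          _ ≤ (linExtCount n P : ℝ) * (((n:ℝ) + compCount n P) / n)^n :=
            mul_le_mul_of_nonneg_left hamgm (by positivity)
    _ = (linExtCount n P : ℝ) * (Real.exp 1 * ((n:ℝ) + compCount n P))^n := by
        rw [div_pow, mul_pow]
        field_simp

lemma lower_final (n : ℕ) (hn : 1 ≤ n) (δ : ℝ) (hδ : 0 < δ) (P : PartialOrder (Fin n))
    (hP : (compCount n P : ℝ) ≤ δ * ((n:ℝ) * ((n:ℝ) - 1) / 2)) :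
    (2/(3*Real.exp 1)) * min (1/δ) (n:ℝ) ≤ (linExtCount n P : ℝ) ^ ((n:ℝ)⁻¹) := by
  set M := min (1/δ) (n:ℝ) with hMdef
  set C := (compCount n P : ℝ) with hCdef
  have hnR : (0:ℝ) < n := by exact_mod_cast hn
  have hM0 : 0 < M := lt_min (by positivity) hnR
  have hMn : M ≤ n := min_le_right _ _
  have hMδ : δ * M ≤ 1 := by
    have h1 : M ≤ 1/δ := min_le_left _ _
    rw [le_div_iff₀ hδ] at h1
    linarith [h1]
  have hC0 : 0 ≤ C := by rw [hCdef]; positivity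
  have hCb : C ≤ δ * (n:ℝ)^2 / 2 := by
    refine le_trans hP ?_
    have : (n:ℝ) - 1 ≤ n := by linarith
    nlinarith
  have hsum : ((n:ℝ) + C) * M ≤ (3/2) * (n:ℝ)^2 := by
    have h1 : (n:ℝ) * M ≤ n^2 := by nlinarith
    have h2 : C * M ≤ (n:ℝ)^2 / 2 := by nlinarith
    nlinarith
  have hepos : (0:ℝ) < Real.exp 1 := Real.exp_pos 1
  have hden : (0:ℝ) < Real.exp 1 * ((n:ℝ) + C) := by positivity
  have hA : (2/(3*Real.exp 1)) * M ≤ (n:ℝ)^2 / (Real.exp 1 * ((n:ℝ) + C)) := by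
    rw [le_div_iff₀ hden]
    have expand : 2/(3*Real.exp 1) * M * (Real.exp 1 * ((n:ℝ) + C))
        = (2/3) * (((n:ℝ) + C) * M) := by
      field_simp
    rw [expand]
    nlinarith
  refine le_trans hA (le_rpow_inv_of_pow_le (by positivity)
    (Nat.one_le_iff_ne_zero.mp hn) ?_)
  rw [div_pow, div_le_iff₀ (by positivity)]
  have := key_real n hn P
  rw [← hCdef] at this
  calc ((n:ℝ)^2)^n ≤ (linExtCount n P : ℝ) * (Real.exp 1 * ((n:ℝ) + C))^n := this
    _ = (linExtCount n P : ℝ) * (Real.exp 1 * ((n:ℝ) + C))^n := rfl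

/-- disjoint union of chains: blocks of consecutive integers of length L -/
def blockOrder (n L : ℕ) : PartialOrder (Fin n) where
  le x y := x = y ∨ (x.val / L = y.val / L ∧ x.val < y.val)
  le_refl x := Or.inl rfl
  le_trans x y z hxy hyz := by
    rcases hxy with rfl | ⟨h1, h2⟩
    · exact hyz
    · rcases hyz with rfl | ⟨h3, h4⟩
      · exact Or.inr ⟨h1, h2⟩
      · exact Or.inr ⟨h1.trans h3, h2.trans h4⟩
  le_antisymm x y hxy hyx := by
    rcases hxy with rfl | ⟨h1, h2⟩
    · rfl
    · rcases hyx with rfl | ⟨h3, h4⟩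
      · rfl
      · omega
  lt x y := x.val / L = y.val / L ∧ x.val < y.val
  lt_iff_le_not_ge x y := by
    constructor
    · intro ⟨h1, h2⟩
      exact ⟨Or.inr ⟨h1, h2⟩, by rintro (rfl | ⟨h3, h4⟩) <;> omega⟩
    · rintro ⟨rfl | ⟨h1, h2⟩, hn⟩
      · exact absurd (Or.inl rfl) hn
      · exact ⟨h1, h2⟩

lemma blockOrder_lt_iff (n L : ℕ) (x y : Fin n) :
    (blockOrder n L).lt x y ↔ (x.val / L = y.val / L ∧ x.val < y.val) := Iff.rfl

lemma compCount_blockOrder (n L : ℕ) (hL : 1 ≤ L) :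
    compCount n (blockOrder n L) ≤ n * (L - 1) := by
  classical
  have hbound : ∀ x y : Fin n, (blockOrder n L).lt x y → y.val - x.val - 1 < L - 1 := by
    intro x y h
    rw [blockOrder_lt_iff] at h
    obtain ⟨h1, h2⟩ := h
    have hdiv1 : L * (x.val / L) ≤ x.val := Nat.mul_div_le _ _
    have hdiv2 : y.val < L * (y.val / L) + L := by
      have := Nat.mod_lt y.val (show 0 < L by omega)
      have h2 := Nat.div_add_mod y.val L
      omega
    rw [h1] at hdiv1
    omega
  have hinj : ∃ g : {p : Fin n × Fin n // (blockOrder n L).lt p.1 p.2} → Fin n × Fin (L-1),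
      Function.Injective g := by
    refine ⟨fun p => (p.1.1, ⟨p.1.2.val - p.1.1.val - 1, hbound _ _ p.2⟩), ?_⟩
    rintro ⟨⟨x1, y1⟩, hp⟩ ⟨⟨x2, y2⟩, hq⟩ hpq
    rw [blockOrder_lt_iff] at hp hq
    dsimp only at hp hq hpq
    simp only [Prod.mk.injEq, Fin.mk.injEq] at hpq
    have hx : x1 = x2 := hpq.1
    subst hx
    have hy : y1.val - x1.val - 1 = y2.val - x1.val - 1 := hpq.2
    have hp2 : x1.val < y1.val := hp.2
    have hq2 : x1.val < y2.val := hq.2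
    have hyy : y1 = y2 := Fin.ext (by omega)
    subst hyy
    rfl
  obtain ⟨g, hg⟩ := hinj
  calc compCount n (blockOrder n L) ≤ Nat.card (Fin n × Fin (L-1)) :=
        Nat.card_le_card_of_injective g hg
    _ = n * (L-1) := by simp [Nat.card_prod]

lemma linExt_blockOrder (n L : ℕ) :
    linExtCount n (blockOrder n L) ≤ (n / L + 1) ^ n := by
  classical
  set k := n / L + 1 with hk
  have hblock : ∀ y : Fin n, y.val / L < k := by
    intro y
    have : y.val / L ≤ n / L := Nat.div_le_div_right (le_of_lt y.2)
    omega
  set Φ : {f : Fin n ≃ Fin n // ∀ x y : Fin n, (blockOrder n L).lt x y → f x < f y} →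
      (Fin n → Fin k) := fun f => fun t => ⟨(f.1.symm t).val / L, hblock _⟩ with hΦ
  have step : ∀ (g g' : {f : Fin n ≃ Fin n // ∀ x y : Fin n,
        (blockOrder n L).lt x y → f x < f y}), Φ g = Φ g' → ∀ m : ℕ,
      (∀ s : Fin n, s.val < m → g.1.symm s = g'.1.symm s) →
      ∀ t : Fin n, t.val = m → ¬ ((g.1.symm t).val < (g'.1.symm t).val) := by
    intro g g' hgg m hIH t ht hlt
    have hb : (g.1.symm t).val / L = (g'.1.symm t).val / L := by
      have h0 : Φ g t = Φ g' t := by rw [hgg]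
      simpa [hΦ, Fin.mk.injEq] using h0
    have hplt : (blockOrder n L).lt (g.1.symm t) (g'.1.symm t) :=
      (blockOrder_lt_iff n L _ _).mpr ⟨hb, hlt⟩
    have h2 : g'.1 (g.1.symm t) < g'.1 (g'.1.symm t) := g'.2 _ _ hplt
    rw [Equiv.apply_symm_apply] at h2
    have h4 : g.1.symm (g'.1 (g.1.symm t)) = g'.1.symm (g'.1 (g.1.symm t)) := by
      refine hIH _ ?_
      omega
    rw [Equiv.symm_apply_apply] at h4
    have h5 : g'.1 (g.1.symm t) = t := g.1.symm.injective h4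
    rw [h5] at h2
    exact lt_irrefl _ h2
  have hinj : Function.Injective Φ := by
    intro f f' hff
    have main : ∀ m : ℕ, ∀ t : Fin n, t.val = m → f.1.symm t = f'.1.symm t := by
      intro m
      induction m using Nat.strong_induction_on with
      | _ m ih =>
        intro t ht
        have hIH : ∀ s : Fin n, s.val < m → f.1.symm s = f'.1.symm s := by
          intro s hs
          exact ih s.val (by omega) s rfl
        have hIH' : ∀ s : Fin n, s.val < m → f'.1.symm s = f.1.symm s := by
          intro s hs
          exact (hIH s hs).symm
        have h1 := step f f' hff m hIH t ht
        have h2 := step f' f hff.symm m hIH' t ht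
        exact Fin.ext (by omega)
    have hsymm : f.1.symm = f'.1.symm := Equiv.ext (fun t => main t.val t rfl)
    refine Subtype.ext ?_
    rw [← Equiv.symm_symm f.1, hsymm, Equiv.symm_symm]
  calc linExtCount n (blockOrder n L) ≤ Nat.card (Fin n → Fin k) :=
        Nat.card_le_card_of_injective Φ hinj
    _ = k ^ n := by simp [Nat.card_fun]

end Aux

theorem fminus_rate_delta_to_zero (δ : ℕ → ℝ)
    (hδ : ∀ n, 0 < δ n)
    (hlim : Filter.Tendsto δ Filter.atTop (nhds 0)) :
    ∃ K₁ K₂ : ℝ, ∃ N : ℕ, 0 < K₁ ∧ 0 < K₂ ∧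
      ∀ n : ℕ, N ≤ n →
        K₁ * min (1 / δ n) (n : ℝ) ≤ ((fMinus n (δ n) : ℝ)) ^ ((n : ℝ)⁻¹) ∧
        ((fMinus n (δ n) : ℝ)) ^ ((n : ℝ)⁻¹) ≤ K₂ * min (1 / δ n) (n : ℝ) := by
  obtain ⟨N₀, hN₀⟩ := (Filter.eventually_atTop).mp (hlim.eventually_lt_const one_pos)
  refine ⟨2/(3*Real.exp 1), 5, max N₀ 2, by positivity, by norm_num, ?_⟩
  intro n hn
  have hn2 : 2 ≤ n := le_trans (le_max_right _ _) hn
  have hδ1 : δ n < 1 := hN₀ n (le_trans (le_max_left _ _) hn)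
  have hδ0 : 0 < δ n := hδ n
  have hn1 : 1 ≤ n := by omega
  have hnne : n ≠ 0 := by omega
  have hnR : (0:ℝ) < n := by exact_mod_cast hn1
  have hn1R : (1:ℝ) ≤ (n:ℝ) - 1 := by
    have : (2:ℝ) ≤ n := by exact_mod_cast hn2
    linarith
  set M := min (1 / δ n) (n:ℝ) with hM
  -- the witness poset
  set L := 1 + ⌊δ n * ((n:ℝ) - 1) / 2⌋₊ with hLdef
  have hL1 : 1 ≤ L := by omega
  have hLR : (0:ℝ) < L := by exact_mod_cast hL1
  have hLgt : δ n * ((n:ℝ) - 1) / 2 < L := by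
    rw [hLdef]
    push_cast
    have := Nat.lt_floor_add_one (δ n * ((n:ℝ) - 1) / 2)
    linarith
  have hcomp : (compCount n (blockOrder n L) : ℝ) ≤ δ n * ((n:ℝ) * ((n:ℝ) - 1) / 2) := by
    have h1 : (compCount n (blockOrder n L) : ℝ) ≤ (n : ℝ) * ((L:ℕ) - 1 : ℕ) := by
      exact_mod_cast compCount_blockOrder n L hL1
    have h2 : (((L:ℕ) - 1 : ℕ) : ℝ) = (⌊δ n * ((n:ℝ) - 1) / 2⌋₊ : ℝ) := by
      rw [hLdef]
      push_cast [Nat.add_sub_cancel_left]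
      ring
    have h3 : (⌊δ n * ((n:ℝ) - 1) / 2⌋₊ : ℝ) ≤ δ n * ((n:ℝ) - 1) / 2 :=
      Nat.floor_le (by positivity)
    calc (compCount n (blockOrder n L) : ℝ) ≤ (n : ℝ) * (((L:ℕ) - 1 : ℕ) : ℝ) := h1
      _ ≤ (n : ℝ) * (δ n * ((n:ℝ) - 1) / 2) := by
          rw [h2]
          exact mul_le_mul_of_nonneg_left h3 (by positivity)
      _ = δ n * ((n:ℝ) * ((n:ℝ) - 1) / 2) := by ring
  have hSmem : fMinus n (δ n) ∈ {m : ℕ | ∃ P : PartialOrder (Fin n),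
      (compCount n P : ℝ) ≤ δ n * ((n : ℝ) * ((n : ℝ) - 1) / 2) ∧ linExtCount n P = m} := by
    apply Nat.sInf_mem
    exact ⟨linExtCount n (blockOrder n L), blockOrder n L, hcomp, rfl⟩
  constructor
  · -- lower bound
    obtain ⟨P, hPcomp, hPlin⟩ := hSmem
    rw [← hPlin]
    exact lower_final n hn1 (δ n) hδ0 P hPcomp
  · -- upper bound
    have hle : fMinus n (δ n) ≤ (n / L + 1) ^ n := by
      refine le_trans (Nat.sInf_le ⟨blockOrder n L, hcomp, rfl⟩) (linExt_blockOrder n L)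
    have hkR : ((fMinus n (δ n) : ℝ)) ^ ((n:ℝ)⁻¹) ≤ ((n / L + 1 : ℕ) : ℝ) := by
      refine rpow_inv_le_of_le_pow hnne ?_ (by positivity)
      exact_mod_cast hle
    refine le_trans hkR ?_
    have hkA : ((n / L + 1 : ℕ) : ℝ) ≤ 5 * (n:ℝ) := by
      have h1 : n / L + 1 ≤ n + 1 := by
        have : n / L ≤ n := Nat.div_le_self n L
        omega
      have h2 : ((n / L + 1 : ℕ) : ℝ) ≤ (n:ℝ) + 1 := by exact_mod_cast h1
      linarith
    have hkB : ((n / L + 1 : ℕ) : ℝ) ≤ 5 * (1 / δ n) := by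
      have hdivle : ((n / L : ℕ) : ℝ) ≤ (n:ℝ) / (L:ℝ) := Nat.cast_div_le
      have hmain : (n:ℝ) / (L:ℝ) ≤ 4 / δ n := by
        rw [div_le_div_iff₀ hLR hδ0]
        nlinarith
      have hone : (1:ℝ) ≤ 1 / δ n := by
        rw [le_div_iff₀ hδ0]
        linarith
      have : ((n / L + 1 : ℕ) : ℝ) = ((n / L : ℕ) : ℝ) + 1 := by push_cast; ring
      rw [this]
      have h5 : 4 / δ n + 1 ≤ 5 * (1 / δ n) := by
        rw [one_div] at hone ⊢
        rw [div_eq_mul_inv]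
        linarith
      linarith
    rw [hM]
    rcases le_total (1 / δ n) ((n:ℝ)) with hc | hc
    · rw [min_eq_left hc]; exact hkB
    · rw [min_eq_right hc]; exact hkA
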